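/- Binomial tail / incomplete beta identity underlying the Clopper–Pearson interval (Lemma 3 of the paper): For natural numbers n and k with 1 ≤ k ≤ n and any real p ∈ [0,1], the upper tail of the Binomial(n, p) distribution equals a regularized incomplete beta integral: ∑_{j=k}^{n} (n choose j) · p^j · (1 − p)^{n−j} = k · (n choose k) · ∫_{0}^{p} t^{k−1} · (1 − t)^{n−k} dt. -/

import Mathlib

open intervalIntegral

lemma ftc_key (n k : ℕ) (hk1 : 1 ≤ k) (p : ℝ) :
    (n.choose k : ℝ) * p ^ k * (1 - p) ^ (n - k) =
      (k : ℝ) * (n.choose k : ℝ) * (∫ t in (0 : ℝ)..p, t ^ (k - 1) * (1 - t) ^ (n - k))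
      - ((n - k : ℕ) : ℝ) * (n.choose k : ℝ) *
          (∫ t in (0 : ℝ)..p, t ^ k * (1 - t) ^ (n - k - 1)) := by
  set m := n - k with hm
  have hderiv : ∀ t : ℝ, HasDerivAt (fun t : ℝ => t ^ k * (1 - t) ^ m)
      ((k : ℝ) * (t ^ (k - 1) * (1 - t) ^ m) - (m : ℝ) * (t ^ k * (1 - t) ^ (m - 1))) t := by
    intro t
    have h1 : HasDerivAt (fun t : ℝ => t ^ k) ((k : ℝ) * t ^ (k - 1)) t := hasDerivAt_pow k t
    have hin : HasDerivAt (fun t : ℝ => 1 - t) (-1) t := by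
      simpa using (hasDerivAt_id t).const_sub (1 : ℝ)
    have h2 : HasDerivAt (fun t : ℝ => (1 - t) ^ m)
        ((m : ℝ) * (1 - t) ^ (m - 1) * (-1)) t :=
      (hasDerivAt_pow m (1 - t)).comp t hin
    have : HasDerivAt (fun t : ℝ => t ^ k * (1 - t) ^ m)
        ((k : ℝ) * t ^ (k - 1) * (1 - t) ^ m + t ^ k * ((m : ℝ) * (1 - t) ^ (m - 1) * (-1))) t :=
      h1.mul h2
    convert this using 1
    ring
  have hcont : Continuous fun t : ℝ =>
      (k : ℝ) * (t ^ (k - 1) * (1 - t) ^ m) - (m : ℝ) * (t ^ k * (1 - t) ^ (m - 1)) := by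
    continuity
  have hint := intervalIntegral.integral_eq_sub_of_hasDerivAt
    (f := fun t : ℝ => t ^ k * (1 - t) ^ m)
    (f' := fun t : ℝ => (k : ℝ) * (t ^ (k - 1) * (1 - t) ^ m)
      - (m : ℝ) * (t ^ k * (1 - t) ^ (m - 1)))
    (a := 0) (b := p) (fun t _ => hderiv t) (hcont.intervalIntegrable 0 p)
  have hzero : (0 : ℝ) ^ k = 0 := zero_pow (by omega)
  have hint2 : (∫ t in (0:ℝ)..p,
      ((k : ℝ) * (t ^ (k - 1) * (1 - t) ^ m) - (m : ℝ) * (t ^ k * (1 - t) ^ (m - 1))))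
      = p ^ k * (1 - p) ^ m := by
    simpa [hzero] using hint
  have hc1 : Continuous fun t : ℝ => t ^ (k - 1) * (1 - t) ^ m := by continuity
  have hc2 : Continuous fun t : ℝ => t ^ k * (1 - t) ^ (m - 1) := by continuity
  have hsplit : (∫ t in (0:ℝ)..p,
      ((k : ℝ) * (t ^ (k - 1) * (1 - t) ^ m) - (m : ℝ) * (t ^ k * (1 - t) ^ (m - 1))))
      = (k : ℝ) * (∫ t in (0:ℝ)..p, t ^ (k - 1) * (1 - t) ^ m)
        - (m : ℝ) * (∫ t in (0:ℝ)..p, t ^ k * (1 - t) ^ (m - 1)) := by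
    rw [intervalIntegral.integral_sub (f := fun t : ℝ => (k : ℝ) * (t ^ (k - 1) * (1 - t) ^ m))
        (g := fun t : ℝ => (m : ℝ) * (t ^ k * (1 - t) ^ (m - 1)))
        (((continuous_const.mul hc1)).intervalIntegrable 0 p)
        ((continuous_const.mul hc2).intervalIntegrable 0 p),
      intervalIntegral.integral_const_mul, intervalIntegral.integral_const_mul]
  rw [hsplit] at hint2
  calc (n.choose k : ℝ) * p ^ k * (1 - p) ^ m
      = (n.choose k : ℝ) * (p ^ k * (1 - p) ^ m) := by ring
    _ = (n.choose k : ℝ) * ((k : ℝ) * (∫ t in (0:ℝ)..p, t ^ (k - 1) * (1 - t) ^ m)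
        - (m : ℝ) * (∫ t in (0:ℝ)..p, t ^ k * (1 - t) ^ (m - 1))) := by rw [← hint2]
    _ = _ := by ring

/-- Binomial tail / incomplete beta identity underlying the Clopper–Pearson
interval: for `1 ≤ k ≤ n` and `p ∈ [0,1]`, the upper tail of the
`Binomial(n, p)` distribution equals a regularized incomplete beta integral. -/
theorem binomial_tail_eq_incomplete_beta (n k : ℕ) (hk1 : 1 ≤ k) (hkn : k ≤ n)
    (p : ℝ) (hp0 : 0 ≤ p) (hp1 : p ≤ 1) :
    ∑ j ∈ Finset.Icc k n, (n.choose j : ℝ) * p ^ j * (1 - p) ^ (n - j) =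
      (k : ℝ) * (n.choose k : ℝ) * ∫ t in (0 : ℝ)..p, t ^ (k - 1) * (1 - t) ^ (n - k) := by
  have main : ∀ d k : ℕ, 1 ≤ k → k + d = n →
      ∑ j ∈ Finset.Icc k n, (n.choose j : ℝ) * p ^ j * (1 - p) ^ (n - j) =
        (k : ℝ) * (n.choose k : ℝ) * ∫ t in (0 : ℝ)..p, t ^ (k - 1) * (1 - t) ^ (n - k) := by
    intro d
    induction d with
    | zero =>
      intro k hk1 hkd
      have hkn' : k = n := by omega
      subst hkn'
      rw [Finset.Icc_self, Finset.sum_singleton]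
      have := ftc_key k k hk1 p
      rw [Nat.sub_self, Nat.cast_zero] at this
      simpa using this
    | succ d ih =>
      intro k hk1 hkd
      have hklt : k < n := by omega
      have hsum : Finset.Icc k n = insert k (Finset.Icc (k + 1) n) := by
        ext x
        simp only [Finset.mem_Icc, Finset.mem_insert]
        omega
      rw [hsum, Finset.sum_insert (by simp)]
      rw [ih (k + 1) (by omega) (by omega)]
      have hkey := ftc_key n k hk1 p
      have hchoose : ((k + 1 : ℕ) : ℝ) * (n.choose (k + 1) : ℝ)
          = ((n - k : ℕ) : ℝ) * (n.choose k : ℝ) := by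
        rw [← Nat.cast_mul, ← Nat.cast_mul, mul_comm ((k+1):ℕ), Nat.choose_succ_right_eq,
          mul_comm]
      have he2 : n - (k + 1) = n - k - 1 := by omega
      push_cast at hchoose ⊢
      rw [he2, hchoose]
      linarith [hkey]
  exact main (n - k) k hk1 (by omega)
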